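/- For K > 0 and a complex number z = u + iρ with u ∈ ℝ and ρ < -1, the integral ∫_{log K}^∞ e^{-izx}(e^x - K) dx converges and equals K^{ρ+1-iu}/((ρ - iu)(ρ + 1 - iu)). -/

import Mathlib

open Complex MeasureTheory Set Filter

lemma aux_int (c : ℂ) (hc : c.re < 0) (a : ℝ) :
    IntegrableOn (fun x : ℝ => Complex.exp (c * x)) (Set.Ioi a) volume := by
  have h0 : 0 < -c.re := by linarith
  refine (exp_neg_integrableOn_Ioi a h0).mono' ?_ ?_
  · exact (Complex.continuous_exp.comp (continuous_const.mul Complex.continuous_ofReal)).aestronglyMeasurable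
  · filter_upwards with x
    simp [Complex.norm_exp, mul_comm]

lemma aux_deriv (c : ℂ) (x : ℝ) :
    HasDerivAt (fun x : ℝ => Complex.exp (c * x)) (c * Complex.exp (c * x)) x := by
  have h2 : HasDerivAt (fun z : ℂ => Complex.exp (c * z)) (c * Complex.exp (c * x)) (x : ℂ) := by
    simpa [mul_comm, Function.comp_def] using (Complex.hasDerivAt_exp (c * x)).comp (x : ℂ)
      ((hasDerivAt_id (x : ℂ)).const_mul c)
  exact h2.comp_ofReal

lemma aux_eq (c : ℂ) (hc : c.re < 0) (a : ℝ) :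
    ∫ x in Set.Ioi a, Complex.exp (c * x) = -Complex.exp (c * a) / c := by
  have hc0 : c ≠ 0 := fun h => by simp [h] at hc
  have hd : ∀ x ∈ Set.Ici a, HasDerivAt (fun x : ℝ => Complex.exp (c * x) / c)
      (Complex.exp (c * x)) x := by
    intro x _
    simpa [mul_div_assoc, mul_div_cancel_left₀ _ hc0] using (aux_deriv c x).div_const c
  have hlim : Tendsto (fun x : ℝ => Complex.exp (c * x) / c) atTop (nhds 0) := by
    rw [tendsto_zero_iff_norm_tendsto_zero]
    have : (fun x : ℝ => ‖Complex.exp (c * x) / c‖) = fun x => Real.exp (c.re * x) / ‖c‖ := by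
      funext x
      simp [Complex.norm_exp]
    rw [this]
    simpa using (Real.tendsto_exp_atBot.comp
      (tendsto_id.const_mul_atTop_of_neg hc)).div_const ‖c‖
  have := integral_Ioi_of_hasDerivAt_of_tendsto' hd (aux_int c hc a) hlim
  rw [this]
  ring


/-- Generalized Fourier transform of the call payoff: for `z = u + iρ` with `ρ < -1`,
`∫_{log K}^∞ e^{-izx}(e^x - K) dx = K^{ρ+1-iu}/((ρ-iu)(ρ+1-iu))`. -/
theorem stmt13 (K u ρ : ℝ) (hK : 0 < K) (hρ : ρ < -1) :
    IntegrableOn (fun x : ℝ => Complex.exp (-I * ((u : ℂ) + ρ * I) * x) *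
        (Complex.exp x - K)) (Set.Ioi (Real.log K)) volume ∧
    ∫ x in Set.Ioi (Real.log K), Complex.exp (-I * ((u : ℂ) + ρ * I) * x) *
        (Complex.exp x - K) =
      (K : ℂ) ^ ((ρ : ℂ) + 1 - I * u) / (((ρ : ℂ) - I * u) * ((ρ : ℂ) + 1 - I * u)) := by
  set c0 : ℂ := (ρ : ℂ) - I * u with hc0def
  set c1 : ℂ := (ρ : ℂ) + 1 - I * u with hc1def
  have hre0 : c0.re = ρ := by simp [hc0def]
  have hre1 : c1.re = ρ + 1 := by simp [hc1def]
  have hc0 : c0.re < 0 := by rw [hre0]; linarith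
  have hc1 : c1.re < 0 := by rw [hre1]; linarith
  have hc0' : c0 ≠ 0 := fun h => by rw [h] at hre0; simp at hre0; linarith
  have hc1' : c1 ≠ 0 := fun h => by rw [h] at hre1; simp at hre1; linarith
  have hcoef : -I * ((u : ℂ) + ρ * I) = c0 := by
    rw [hc0def]; ring_nf; rw [Complex.I_sq]; ring
  have hfun : (fun x : ℝ => Complex.exp (-I * ((u : ℂ) + ρ * I) * x) *
      (Complex.exp x - K)) = fun x : ℝ => Complex.exp (c1 * x) - K * Complex.exp (c0 * x) := by
    funext x
    rw [hcoef, mul_sub, show c1 * (x : ℂ) = c0 * x + x by rw [hc0def, hc1def]; ring,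
      Complex.exp_add]
    ring
  have hint1 := aux_int c1 hc1 (Real.log K)
  have hint0 := aux_int c0 hc0 (Real.log K)
  have hint : IntegrableOn (fun x : ℝ => Complex.exp (-I * ((u : ℂ) + ρ * I) * x) *
      (Complex.exp x - K)) (Set.Ioi (Real.log K)) volume := by
    rw [hfun]; exact hint1.sub (hint0.const_mul K)
  refine ⟨hint, ?_⟩
  have hK0 : (K : ℂ) ≠ 0 := by exact_mod_cast hK.ne'
  have hcp : ∀ c : ℂ, Complex.exp (c * Real.log K) = (K : ℂ) ^ c := fun c => by
    rw [Complex.cpow_def_of_ne_zero hK0, ← Complex.ofReal_log hK.le, mul_comm]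
  have hKc : (K : ℂ) * (K : ℂ) ^ c0 = (K : ℂ) ^ c1 := by
    rw [show c1 = c0 + 1 by rw [hc0def, hc1def]; ring, Complex.cpow_add _ _ hK0,
      Complex.cpow_one]
    ring
  rw [hfun, integral_sub hint1 (hint0.const_mul K), integral_const_mul,
    aux_eq c1 hc1, aux_eq c0 hc0, hcp, hcp]
  · clear_value c0 c1
    rw [← hKc]
    have h10 : c1 - c0 = 1 := by rw [hc0def, hc1def]; ring
    field_simp
    linear_combination ((K : ℂ) ^ c0) * h10
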